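/- Let σ, γ > 0, t ≥ 0 and a > 0. Then ∫_ℝ [1 − 2Φ(−(t − 2σγ^{1/2} g)/(2a))] · min(1, φ_{σ²γ}(t − σ√γ g)/φ_{σ²γ}(σ√γ g)) φ(g) dg = 0, where φ and Φ are the standard Gaussian density and cumulative distribution function. -/

import Mathlib

open MeasureTheory

/-- Standard Gaussian density. -/
noncomputable def stdG (g : ℝ) : ℝ :=
  (Real.sqrt (2 * Real.pi))⁻¹ * Real.exp (-g ^ 2 / 2)

/-- Standard Gaussian cumulative distribution function. -/
noncomputable def Phi (x : ℝ) : ℝ := ∫ u in Set.Iio x, stdG u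

/-- Density of the one-dimensional centered Gaussian with variance `v`. -/
noncomputable def gpdf (v x : ℝ) : ℝ :=
  (Real.sqrt (2 * Real.pi * v))⁻¹ * Real.exp (-x ^ 2 / (2 * v))

lemma stdG_integrable : Integrable stdG := by
  have h : Integrable (fun x : ℝ => Real.exp (-(1/2 : ℝ) * x ^ 2)) :=
    integrable_exp_neg_mul_sq (by norm_num)
  have : stdG = fun x => (Real.sqrt (2 * Real.pi))⁻¹ * Real.exp (-(1/2 : ℝ) * x ^ 2) := by
    funext x; simp only [stdG]; ring_nf
  rw [this]
  exact h.const_mul _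

lemma stdG_integral : ∫ x : ℝ, stdG x = 1 := by
  have h : ∫ x : ℝ, Real.exp (-(1/2 : ℝ) * x ^ 2) = Real.sqrt (Real.pi / (1/2)) :=
    integral_gaussian (1/2)
  have e : stdG = fun x => (Real.sqrt (2 * Real.pi))⁻¹ * Real.exp (-(1/2 : ℝ) * x ^ 2) := by
    funext x; simp only [stdG]; ring_nf
  rw [e, integral_const_mul, h]
  have h2 : Real.pi / (1/2 : ℝ) = 2 * Real.pi := by ring
  rw [h2, inv_mul_cancel₀]
  positivity

lemma Phi_neg (x : ℝ) : Phi (-x) = 1 - Phi x := by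
  have heven : ∀ u : ℝ, stdG (-u) = stdG u := by
    intro u; simp [stdG]
  have h1 : Phi (-x) = ∫ u in Set.Ioi x, stdG u := by
    rw [Phi]
    rw [show (∫ u in Set.Iio (-x), stdG u) = ∫ u in Set.Iic (-x), stdG u from
      setIntegral_congr_set Iio_ae_eq_Iic]
    rw [show (∫ u in Set.Iic (-x), stdG u) = ∫ u in Set.Iic (-x), stdG (-u) from by
      simp_rw [heven]]
    rw [integral_comp_neg_Iic, neg_neg]
  have h2 : Phi x = ∫ u in Set.Iic x, stdG u := by
    rw [Phi]; exact setIntegral_congr_set Iio_ae_eq_Iic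
  have h3 : (∫ u in Set.Iic x, stdG u) + (∫ u in Set.Ioi x, stdG u) = ∫ u : ℝ, stdG u :=
    intervalIntegral.integral_Iic_add_Ioi stdG_integrable.integrableOn stdG_integrable.integrableOn
  rw [stdG_integral] at h3
  rw [h1, h2]; linarith

lemma gpdf_pos {v : ℝ} (hv : 0 < v) (x : ℝ) : 0 < gpdf v x := by
  unfold gpdf
  have : 0 < Real.sqrt (2 * Real.pi * v) := Real.sqrt_pos.mpr (by positivity)
  positivity

theorem sticky_symmetry_integral (σ γ t a : ℝ)
    (hσ : 0 < σ) (hγ : 0 < γ) (ht : 0 ≤ t) (ha : 0 < a) :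
    ∫ g : ℝ,
      (1 - 2 * Phi (-(t - 2 * σ * Real.sqrt γ * g) / (2 * a))) *
        min 1 (gpdf (σ ^ 2 * γ) (t - σ * Real.sqrt γ * g) /
          gpdf (σ ^ 2 * γ) (σ * Real.sqrt γ * g)) * stdG g = 0 := by
  set c : ℝ := σ * Real.sqrt γ with hc_def
  have hc : 0 < c := by positivity
  set v : ℝ := σ ^ 2 * γ with hv_def
  have hv : 0 < v := by positivity
  have hcv : c ^ 2 = v := by
    rw [hc_def, hv_def, mul_pow, Real.sq_sqrt hγ.le]
  -- stdG g = c * gpdf v (c * g)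
  have hstd : ∀ g : ℝ, stdG g = c * gpdf v (c * g) := by
    intro g
    unfold stdG gpdf
    have h1 : Real.sqrt (2 * Real.pi * v) = Real.sqrt (2 * Real.pi) * c := by
      rw [Real.sqrt_mul (by positivity), ← hcv, Real.sqrt_sq hc.le]
    have h2 : -(c * g) ^ 2 / (2 * v) = -g ^ 2 / 2 := by
      rw [← hcv]; field_simp
    rw [h1, h2, mul_inv]
    field_simp
  -- the integrand equals G g := (1 - 2Φ(...)) * c * min (gpdf v (c g)) (gpdf v (t - c g))
  set G : ℝ → ℝ := fun g =>
    (1 - 2 * Phi (-(t - 2 * c * g) / (2 * a))) * (c * min (gpdf v (c * g)) (gpdf v (t - c * g)))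
    with hG_def
  have hintg : ∀ g : ℝ,
      (1 - 2 * Phi (-(t - 2 * σ * Real.sqrt γ * g) / (2 * a))) *
        min 1 (gpdf (σ ^ 2 * γ) (t - σ * Real.sqrt γ * g) /
          gpdf (σ ^ 2 * γ) (σ * Real.sqrt γ * g)) * stdG g = G g := by
    intro g
    have hB := gpdf_pos hv (c * g)
    have key : min 1 (gpdf v (t - c * g) / gpdf v (c * g)) * stdG g =
        c * min (gpdf v (c * g)) (gpdf v (t - c * g)) := by
      rw [hstd g]
      rw [show min 1 (gpdf v (t - c * g) / gpdf v (c * g)) * (c * gpdf v (c * g)) =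
        c * (min 1 (gpdf v (t - c * g) / gpdf v (c * g)) * gpdf v (c * g)) from by ring]
      congr 1
      rw [min_mul_of_nonneg _ _ hB.le, one_mul, div_mul_cancel₀ _ hB.ne']
    have e1 : 2 * σ * Real.sqrt γ * g = 2 * c * g := by rw [hc_def]; ring
    have e2 : σ * Real.sqrt γ * g = c * g := rfl
    rw [e1, e2, ← hv_def, mul_assoc, key, hG_def]
  rw [integral_congr_ae (Filter.Eventually.of_forall hintg)]
  -- antisymmetry of G under g ↦ t/c - g
  have hanti : ∀ g : ℝ, G (t / c - g) = -G g := by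
    intro g
    have e1 : c * (t / c - g) = t - c * g := by field_simp
    have e2 : t - c * (t / c - g) = c * g := by field_simp; ring
    have e3 : t - 2 * c * (t / c - g) = -(t - 2 * c * g) := by field_simp; ring
    rw [hG_def]
    simp only [e1, e2, e3]
    rw [neg_neg, show (t - 2 * c * g) / (2 * a) = -(-(t - 2 * c * g) / (2 * a)) from by ring,
      Phi_neg, min_comm]
    ring
  -- change of variables
  have hsub : (∫ g : ℝ, G (t / c - g)) = ∫ g : ℝ, G g := by
    have h1 : (∫ g : ℝ, G (t / c + g)) = ∫ g : ℝ, G g := by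
      simp_rw [show ∀ g : ℝ, t / c + g = g + t / c from fun g => add_comm _ _]
      exact integral_add_right_eq_self G (t / c)
    rw [← h1, ← integral_neg_eq_self (fun g => G (t / c + g)) volume]
    simp [sub_eq_add_neg]
  have : (∫ g : ℝ, G g) = -∫ g : ℝ, G g := by
    conv_lhs => rw [← hsub]
    simp_rw [hanti]
    exact integral_neg G
  linarith
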